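/- (Concentration of the clipped importance-sampling estimator.) Suppose η > 0 and ε > 0 satisfy P({ω : r(ω) > η}) ≤ ε/2. Let μ = ∫ Y dP and define W_s = Y(X_s)·r(X_s)·1{r(X_s) ≤ η} for s = 1,…,t. Then for every δ > 0, the probability of the event { μ − δ − ε/2 ≤ (1/t)·Σ_{s=1}^t W_s ≤ μ + δ } is at least 1 − 2·exp(−δ²·t/(2η²)). -/

import Mathlib

open MeasureTheory ProbabilityTheory

open MeasureTheory ProbabilityTheory Real
open scoped ENNReal NNReal

lemma exp_le_interp {c z l : ℝ} (hc : 0 < c) (hz : |z| ≤ c) :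
    Real.exp (l * z) ≤ Real.cosh (l * c) + (z / c) * Real.sinh (l * c) := by
  obtain ⟨h1, h2⟩ := abs_le.mp hz
  have key : Real.exp (l * z) ≤
      ((c + z) / (2 * c)) * Real.exp (l * c) + ((c - z) / (2 * c)) * Real.exp (l * (-c)) := by
    have ha0 : 0 ≤ (c + z) / (2 * c) := div_nonneg (by linarith) (by linarith)
    have hb0 : 0 ≤ (c - z) / (2 * c) := by
      apply div_nonneg (by linarith) (by linarith)
    have hab : (c + z) / (2 * c) + (c - z) / (2 * c) = 1 := by
      field_simp; ring
    have := convexOn_exp.2 (Set.mem_univ (l * c)) (Set.mem_univ (l * (-c))) ha0 hb0 hab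
    simp only [smul_eq_mul] at this
    have harg : (c + z) / (2 * c) * (l * c) + (c - z) / (2 * c) * (l * (-c)) = l * z := by
      field_simp; ring
    rwa [harg] at this
  refine key.trans (le_of_eq ?_)
  rw [Real.cosh_eq, Real.sinh_eq]
  rw [mul_neg, Real.exp_neg]
  field_simp
  ring

lemma integrable_exp_of_bounded {Ω : Type*} [MeasurableSpace Ω] (μ : Measure Ω)
    [IsProbabilityMeasure μ] {Z : Ω → ℝ} (hZ : Measurable Z) {c : ℝ}
    (hb : ∀ ω, |Z ω| ≤ c) (l : ℝ) :
    Integrable (fun ω => Real.exp (l * Z ω)) μ := by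
  refine (integrable_const (Real.exp (|l| * c))).mono'
    ((hZ.const_mul l).exp.aestronglyMeasurable) (ae_of_all _ fun ω => ?_)
  rw [Real.norm_eq_abs, Real.abs_exp, Real.exp_le_exp]
  calc l * Z ω ≤ |l * Z ω| := le_abs_self _
    _ = |l| * |Z ω| := abs_mul _ _
    _ ≤ |l| * c := by
        apply mul_le_mul_of_nonneg_left (hb ω) (abs_nonneg _)

lemma mgf_le_of_bounded {Ω : Type*} [MeasurableSpace Ω] (μ : Measure Ω)
    [IsProbabilityMeasure μ] {Z : Ω → ℝ} (hZ : Measurable Z) {c : ℝ} (hc : 0 < c)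
    (hb : ∀ ω, |Z ω| ≤ c) (hmean : ∫ ω, Z ω ∂μ = 0) (l : ℝ) :
    mgf Z μ l ≤ Real.exp (l ^ 2 * c ^ 2 / 2) := by
  have hZint : Integrable Z μ :=
    (integrable_const c).mono' hZ.aestronglyMeasurable (ae_of_all _ fun ω => by
      rw [Real.norm_eq_abs]; exact hb ω)
  have h1 : mgf Z μ l ≤ ∫ ω, (Real.cosh (l * c) + (Z ω / c) * Real.sinh (l * c)) ∂μ := by
    refine integral_mono (integrable_exp_of_bounded μ hZ hb l) ?_ fun ω => exp_le_interp hc (hb ω)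
    exact (integrable_const _).add (((hZint.div_const c).mul_const _))
  have h2 : ∫ ω, (Real.cosh (l * c) + (Z ω / c) * Real.sinh (l * c)) ∂μ = Real.cosh (l * c) := by
    rw [integral_add (integrable_const _) ((hZint.div_const c).mul_const _),
      integral_const, integral_mul_const, integral_div, hmean]
    simp
  have h3 : Real.cosh (l * c) ≤ Real.exp ((l * c) ^ 2 / 2) := Real.cosh_le_exp_half_sq _
  calc mgf Z μ l ≤ Real.cosh (l * c) := h1.trans_eq h2
    _ ≤ Real.exp ((l * c) ^ 2 / 2) := h3
    _ = Real.exp (l ^ 2 * c ^ 2 / 2) := by rw [mul_pow]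
open MeasureTheory ProbabilityTheory Real Finset

lemma upper_tail {Ω' : Type*} [MeasurableSpace Ω'] (Pr : Measure Ω') [IsProbabilityMeasure Pr]
    {t : ℕ} {Z : Fin t → Ω' → ℝ} (hmeas : ∀ s, Measurable (Z s))
    (hindep : iIndepFun Z Pr) {c : ℝ} (hc : 0 < c)
    (hb : ∀ s ω, |Z s ω| ≤ c) (hmean : ∀ s, ∫ ω, Z s ω ∂Pr = 0)
    {δ : ℝ} (hδ : 0 < δ) :
    (Pr {ω | (t : ℝ) * δ ≤ ∑ s, Z s ω}).toReal ≤ Real.exp (-(δ ^ 2 * t) / (2 * c ^ 2)) := by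
  set l : ℝ := δ / c ^ 2 with hl
  have hl0 : 0 ≤ l := by positivity
  have hint : ∀ s : Fin t, s ∈ Finset.univ →
      Integrable (fun ω => Real.exp (l * Z s ω)) Pr := fun s _ =>
    integrable_exp_of_bounded Pr (hmeas s) (hb s) l
  have hintsum : Integrable (fun ω => Real.exp (l * (∑ s, Z s) ω)) Pr :=
    hindep.integrable_exp_mul_sum hmeas hint
  have hset : {ω | (t : ℝ) * δ ≤ ∑ s, Z s ω} = {ω | (t : ℝ) * δ ≤ (∑ s, Z s) ω} := by
    ext ω; simp [Finset.sum_apply]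
  rw [hset]
  have h1 := measure_ge_le_exp_mul_mgf (X := ∑ s, Z s) (μ := Pr) ((t : ℝ) * δ) hl0 hintsum
  have h2 : mgf (∑ s, Z s) Pr l ≤ Real.exp ((t : ℝ) * (l ^ 2 * c ^ 2 / 2)) := by
    rw [hindep.mgf_sum hmeas]
    calc ∏ s : Fin t, mgf (Z s) Pr l ≤ ∏ _s : Fin t, Real.exp (l ^ 2 * c ^ 2 / 2) :=
          Finset.prod_le_prod (fun s _ => mgf_nonneg)
            (fun s _ => mgf_le_of_bounded Pr (hmeas s) hc (hb s) (hmean s) l)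
      _ = Real.exp (l ^ 2 * c ^ 2 / 2) ^ t := by simp
      _ = Real.exp ((t : ℝ) * (l ^ 2 * c ^ 2 / 2)) := by rw [← Real.exp_nat_mul]
  calc (Pr {ω | (t : ℝ) * δ ≤ (∑ s, Z s) ω}).toReal
      ≤ Real.exp (-l * ((t : ℝ) * δ)) * mgf (∑ s, Z s) Pr l := h1
    _ ≤ Real.exp (-l * ((t : ℝ) * δ)) * Real.exp ((t : ℝ) * (l ^ 2 * c ^ 2 / 2)) := by
        apply mul_le_mul_of_nonneg_left h2 (Real.exp_pos _).le
    _ = Real.exp (-l * ((t : ℝ) * δ) + (t : ℝ) * (l ^ 2 * c ^ 2 / 2)) := (Real.exp_add _ _).symm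
    _ = Real.exp (-(δ ^ 2 * t) / (2 * c ^ 2)) := by
        congr 1
        rw [hl]
        field_simp
        ring

/-- Concentration of the clipped importance-sampling estimator: if `P(r > η) ≤ ε/2`
and `X_1, …, X_t` are i.i.d. with law `Q`, then with probability at least
`1 − 2·exp(−δ²t/(2η²))` the clipped empirical mean `(1/t)·Σ_s Y(X_s)·r(X_s)·1{r(X_s) ≤ η}`
lies in `[μ − δ − ε/2, μ + δ]`, where `μ = ∫ Y dP`. -/
theorem stmt2 {Ω : Type*} [mΩ : MeasurableSpace Ω]
    (P Q : Measure Ω) [IsProbabilityMeasure P] [IsProbabilityMeasure Q]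
    (r : Ω → ℝ) (hr_meas : Measurable r) (hr_nonneg : ∀ ω, 0 ≤ r ω)
    (hPQ : ∀ A : Set Ω, MeasurableSet A → (P A).toReal = ∫ ω in A, r ω ∂Q)
    (Y : Ω → ℝ) (hY_meas : Measurable Y)
    (hY0 : ∀ ω, 0 ≤ Y ω) (hY1 : ∀ ω, Y ω ≤ 1)
    (η ε : ℝ) (hη : 0 < η) (hε : 0 < ε)
    (htail : (P {ω | η < r ω}).toReal ≤ ε / 2)
    {Ω' : Type*} [MeasurableSpace Ω'] (Pr : Measure Ω') [IsProbabilityMeasure Pr]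
    (t : ℕ) (ht : 1 ≤ t) (X : Fin t → Ω' → Ω)
    (hX_meas : ∀ s, Measurable (X s))
    (hX_indep : iIndepFun X Pr)
    (hX_dist : ∀ s, Measure.map (X s) Pr = Q)
    (δ : ℝ) (hδ : 0 < δ) :
    1 - 2 * Real.exp (-(δ ^ 2 * t) / (2 * η ^ 2)) ≤
      (Pr {ω' | (∫ ω, Y ω ∂P) - δ - ε / 2 ≤
          (1 / t) * ∑ s, (if r (X s ω') ≤ η then Y (X s ω') * r (X s ω') else 0) ∧
          (1 / t) * ∑ s, (if r (X s ω') ≤ η then Y (X s ω') * r (X s ω') else 0) ≤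
          (∫ ω, Y ω ∂P) + δ}).toReal := by
  classical
  set f : Ω → ℝ := fun ω => if r ω ≤ η then Y ω * r ω else 0 with hf_def
  have hf_meas : Measurable f :=
    Measurable.ite (measurableSet_le hr_meas measurable_const)
      (hY_meas.mul hr_meas) measurable_const
  have hf_nonneg : ∀ ω, 0 ≤ f ω := by
    intro ω; rw [hf_def]; dsimp only
    split_ifs with h
    · exact mul_nonneg (hY0 ω) (hr_nonneg ω)
    · exact le_refl 0
  have hf_le : ∀ ω, f ω ≤ η := by
    intro ω; rw [hf_def]; dsimp only
    split_ifs with h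
    · calc Y ω * r ω ≤ 1 * r ω := mul_le_mul_of_nonneg_right (hY1 ω) (hr_nonneg ω)
        _ = r ω := one_mul _
        _ ≤ η := h
    · exact hη.le
  -- integrability of r
  have hr_int : Integrable r Q := by
    by_contra h
    have h0 := hPQ Set.univ MeasurableSet.univ
    rw [measure_univ, ENNReal.toReal_one, setIntegral_univ, integral_undef h] at h0
    norm_num at h0
  -- P as withDensity
  have hP_eq : P = Q.withDensity (fun ω => ENNReal.ofReal (r ω)) := by
    refine Measure.ext fun A hA => ?_
    rw [withDensity_apply _ hA,
      ← ofReal_integral_eq_lintegral_ofReal (hr_int.restrict)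
        (ae_of_all _ fun ω => hr_nonneg ω),
      ← hPQ A hA, ENNReal.ofReal_toReal (measure_ne_top P A)]
  -- change of variables for μ
  have hYr_int : Integrable (fun ω => r ω * Y ω) Q := by
    refine hr_int.mono' ((hr_meas.mul hY_meas).aestronglyMeasurable) (ae_of_all _ fun ω => ?_)
    rw [Real.norm_eq_abs, abs_mul, abs_of_nonneg (hr_nonneg ω), abs_of_nonneg (hY0 ω)]
    calc r ω * Y ω ≤ r ω * 1 := mul_le_mul_of_nonneg_left (hY1 ω) (hr_nonneg ω)
      _ = r ω := mul_one _
  have hμ_eq : (∫ ω, Y ω ∂P) = ∫ ω, r ω * Y ω ∂Q := by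
    rw [hP_eq]
    have hmeas' : Measurable fun ω => (r ω).toNNReal := hr_meas.real_toNNReal
    have : (fun ω => ENNReal.ofReal (r ω)) = fun ω => ((r ω).toNNReal : ℝ≥0∞) := rfl
    rw [this, integral_withDensity_eq_integral_smul hmeas' Y]
    congr 1
    ext ω
    rw [NNReal.smul_def, smul_eq_mul, Real.coe_toNNReal _ (hr_nonneg ω)]
  set μ' : ℝ := ∫ ω, Y ω ∂P with hμ'_def
  -- integrability and bounds on m
  have hf_int : Integrable f Q := by
    refine hr_int.mono' hf_meas.aestronglyMeasurable (ae_of_all _ fun ω => ?_)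
    rw [Real.norm_eq_abs, abs_of_nonneg (hf_nonneg ω), hf_def]
    dsimp only
    split_ifs with h
    · calc Y ω * r ω ≤ 1 * r ω := mul_le_mul_of_nonneg_right (hY1 ω) (hr_nonneg ω)
        _ = r ω := one_mul _
    · exact hr_nonneg ω
  set m : ℝ := ∫ ω, f ω ∂Q with hm_def
  have hm_nonneg : 0 ≤ m := integral_nonneg hf_nonneg
  have hm_le_η : m ≤ η := by
    calc m ≤ ∫ _ω, η ∂Q := integral_mono hf_int (integrable_const η) hf_le
      _ = η := by simp
  have hm_le_μ : m ≤ μ' := by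
    rw [hμ_eq]
    refine integral_mono hf_int hYr_int fun ω => ?_
    rw [hf_def]; dsimp only
    split_ifs with h
    · rw [mul_comm]
    · exact mul_nonneg (hr_nonneg ω) (hY0 ω)
  have hμ_le_m : μ' - ε / 2 ≤ m := by
    have hA : MeasurableSet {ω | η < r ω} := measurableSet_lt measurable_const hr_meas
    have hind_int : Integrable ({ω | η < r ω}.indicator r) Q := hr_int.indicator hA
    have hsub : ∫ ω, (r ω * Y ω - f ω) ∂Q ≤ ∫ ω, {ω | η < r ω}.indicator r ω ∂Q := by
      refine integral_mono (hYr_int.sub hf_int) hind_int fun ω => ?_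
      rw [hf_def]; dsimp only
      by_cases h : r ω ≤ η
      · rw [if_pos h]
        have : ω ∉ {ω | η < r ω} := by simpa using h
        rw [Set.indicator_of_notMem this]
        rw [mul_comm]; simp
      · rw [if_neg h]
        have hmem : ω ∈ {ω | η < r ω} := by simpa using lt_of_not_ge h
        rw [Set.indicator_of_mem hmem]
        calc r ω * Y ω - 0 = r ω * Y ω := sub_zero _
          _ ≤ r ω * 1 := mul_le_mul_of_nonneg_left (hY1 ω) (hr_nonneg ω)
          _ = r ω := mul_one _
    rw [integral_sub hYr_int hf_int] at hsub
    have hval : ∫ ω, {ω | η < r ω}.indicator r ω ∂Q = (P {ω | η < r ω}).toReal := by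
      rw [integral_indicator hA, ← hPQ _ hA]
    rw [hval] at hsub
    have := hsub.trans htail
    rw [hμ_eq, hm_def]
    linarith
  -- the centered variables
  set Z : Fin t → Ω' → ℝ := fun s ω' => f (X s ω') - m with hZ_def
  have hZ_meas : ∀ s, Measurable (Z s) := fun s =>
    (hf_meas.comp (hX_meas s)).sub measurable_const
  have hZ_indep : iIndepFun Z Pr := by
    have := hX_indep.comp (fun _ => fun ω => f ω - m)
      (fun _ => hf_meas.sub measurable_const)
    exact this
  have hZ_bdd : ∀ s ω', |Z s ω'| ≤ η := by
    intro s ω'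
    rw [hZ_def]; dsimp only
    rw [abs_le]
    constructor
    · have := hf_nonneg (X s ω'); linarith
    · have := hf_le (X s ω'); linarith
  have hfX_int : ∀ s, Integrable (fun ω' => f (X s ω')) Pr := by
    intro s
    refine (integrable_const η).mono'
      ((hf_meas.comp (hX_meas s)).aestronglyMeasurable) (ae_of_all _ fun ω' => ?_)
    rw [Real.norm_eq_abs, abs_of_nonneg (hf_nonneg _)]
    exact hf_le _
  have hZ_mean : ∀ s, ∫ ω', Z s ω' ∂Pr = 0 := by
    intro s
    rw [hZ_def]
    dsimp only
    rw [integral_sub (hfX_int s) (integrable_const m), integral_const]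
    have : ∫ ω', f (X s ω') ∂Pr = ∫ ω, f ω ∂Q := by
      rw [← hX_dist s, integral_map (hX_meas s).aemeasurable hf_meas.aestronglyMeasurable]
    rw [this]
    simp [hm_def]
  -- tail bounds
  have T1 : (Pr {ω' | (t : ℝ) * δ ≤ ∑ s, Z s ω'}).toReal ≤
      Real.exp (-(δ ^ 2 * t) / (2 * η ^ 2)) :=
    upper_tail Pr hZ_meas hZ_indep hη hZ_bdd hZ_mean hδ
  have T2 : (Pr {ω' | ∑ s, Z s ω' ≤ -((t : ℝ) * δ)}).toReal ≤
      Real.exp (-(δ ^ 2 * t) / (2 * η ^ 2)) := by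
    have hneg_meas : ∀ s, Measurable (fun ω' => -(Z s ω')) := fun s => (hZ_meas s).neg
    have hneg_indep : iIndepFun
        (fun s => fun ω' => -(Z s ω')) Pr := by
      have := hZ_indep.comp (fun _ => fun x : ℝ => -x) (fun _ => measurable_neg)
      exact this
    have hneg_bdd : ∀ s ω', |(-(Z s ω'))| ≤ η := fun s ω' => by
      rw [abs_neg]; exact hZ_bdd s ω'
    have hneg_mean : ∀ s, ∫ ω', -(Z s ω') ∂Pr = 0 := fun s => by
      rw [integral_neg, hZ_mean s, neg_zero]
    have := upper_tail Pr hneg_meas hneg_indep hη hneg_bdd hneg_mean hδ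
    have hset : {ω' | ∑ s, Z s ω' ≤ -((t : ℝ) * δ)}
        = {ω' | (t : ℝ) * δ ≤ ∑ s, -(Z s ω')} := by
      ext ω'
      simp only [Set.mem_setOf_eq, Finset.sum_neg_distrib]
      constructor
      · intro h; linarith
      · intro h; linarith
    rw [hset]
    exact this
  -- the good event
  set avg : Ω' → ℝ := fun ω' => (1 / (t : ℝ)) * ∑ s, f (X s ω') with havg_def
  have havg_meas : Measurable avg :=
    measurable_const.mul (Finset.measurable_sum _ fun s _ => hf_meas.comp (hX_meas s))
  set E0 : Set Ω' := {ω' | m - δ ≤ avg ω' ∧ avg ω' ≤ m + δ} with hE0_def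
  have hE0_meas : MeasurableSet E0 := by
    rw [hE0_def]
    exact (measurableSet_le measurable_const havg_meas).inter
      (measurableSet_le havg_meas measurable_const)
  have ht_pos : (0 : ℝ) < t := by
    have : (1 : ℝ) ≤ t := by exact_mod_cast ht
    linarith
  have hcompl : E0ᶜ ⊆ {ω' | (t : ℝ) * δ ≤ ∑ s, Z s ω'} ∪
      {ω' | ∑ s, Z s ω' ≤ -((t : ℝ) * δ)} := by
    intro ω' hω'
    rw [hE0_def] at hω'
    simp only [Set.mem_compl_iff, Set.mem_setOf_eq, not_and_or, not_le] at hω'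
    have hsumZ : ∑ s, Z s ω' = (∑ s, f (X s ω')) - (t : ℝ) * m := by
      rw [hZ_def]
      dsimp only
      rw [Finset.sum_sub_distrib]
      simp [mul_comm]
    have havg_eq : ∑ s, f (X s ω') = (t : ℝ) * avg ω' := by
      rw [havg_def]; dsimp only
      field_simp
    rcases hω' with h | h
    · right
      simp only [Set.mem_setOf_eq]
      rw [hsumZ, havg_eq]
      have : (t : ℝ) * avg ω' ≤ (t : ℝ) * (m - δ) :=
        mul_le_mul_of_nonneg_left h.le ht_pos.le
      nlinarith
    · left
      simp only [Set.mem_setOf_eq]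
      rw [hsumZ, havg_eq]
      have : (t : ℝ) * (m + δ) ≤ (t : ℝ) * avg ω' :=
        mul_le_mul_of_nonneg_left h.le ht_pos.le
      nlinarith
  -- measure arithmetic
  have hE0c_le : (Pr E0ᶜ).toReal ≤ 2 * Real.exp (-(δ ^ 2 * t) / (2 * η ^ 2)) := by
    have h1 : Pr E0ᶜ ≤ Pr ({ω' | (t : ℝ) * δ ≤ ∑ s, Z s ω'} ∪
        {ω' | ∑ s, Z s ω' ≤ -((t : ℝ) * δ)}) := measure_mono hcompl
    have h2 := measure_union_le (μ := Pr) {ω' | (t : ℝ) * δ ≤ ∑ s, Z s ω'}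
      {ω' | ∑ s, Z s ω' ≤ -((t : ℝ) * δ)}
    have h3 : (Pr E0ᶜ).toReal ≤ (Pr {ω' | (t : ℝ) * δ ≤ ∑ s, Z s ω'}).toReal
        + (Pr {ω' | ∑ s, Z s ω' ≤ -((t : ℝ) * δ)}).toReal := by
      calc (Pr E0ᶜ).toReal ≤ (Pr ({ω' | (t : ℝ) * δ ≤ ∑ s, Z s ω'} ∪
            {ω' | ∑ s, Z s ω' ≤ -((t : ℝ) * δ)})).toReal :=
            ENNReal.toReal_mono (measure_ne_top _ _) h1
        _ ≤ ((Pr {ω' | (t : ℝ) * δ ≤ ∑ s, Z s ω'})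
            + (Pr {ω' | ∑ s, Z s ω' ≤ -((t : ℝ) * δ)})).toReal :=
            ENNReal.toReal_mono (by finiteness) h2
        _ = _ := ENNReal.toReal_add (measure_ne_top _ _) (measure_ne_top _ _)
    linarith
  have hE0_lb : 1 - 2 * Real.exp (-(δ ^ 2 * t) / (2 * η ^ 2)) ≤ (Pr E0).toReal := by
    have hadd : Pr E0 + Pr E0ᶜ = 1 := by
      rw [measure_add_measure_compl hE0_meas, measure_univ]
    have : (Pr E0).toReal + (Pr E0ᶜ).toReal = 1 := by
      rw [← ENNReal.toReal_add (measure_ne_top _ _) (measure_ne_top _ _), hadd,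
        ENNReal.toReal_one]
    linarith
  -- inclusion into target event
  have hincl : E0 ⊆ {ω' | μ' - δ - ε / 2 ≤
      (1 / (t : ℝ)) * ∑ s, (if r (X s ω') ≤ η then Y (X s ω') * r (X s ω') else 0) ∧
      (1 / (t : ℝ)) * ∑ s, (if r (X s ω') ≤ η then Y (X s ω') * r (X s ω') else 0) ≤
      μ' + δ} := by
    intro ω' hω'
    rw [hE0_def] at hω'
    obtain ⟨h1, h2⟩ := hω'
    have heq : (1 / (t : ℝ)) * ∑ s, (if r (X s ω') ≤ η then Y (X s ω') * r (X s ω') else 0)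
        = avg ω' := rfl
    constructor
    · rw [heq]; linarith
    · rw [heq]; linarith
  calc 1 - 2 * Real.exp (-(δ ^ 2 * t) / (2 * η ^ 2)) ≤ (Pr E0).toReal := hE0_lb
    _ ≤ _ := ENNReal.toReal_mono (measure_ne_top _ _) (measure_mono hincl)
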